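/- Let a > 0 be a rational real number, and for an integer k ≥ 4 set N_a(k−2) := min( π²·⌈a·(k−2)/(a+1)⌉²/a² , π²·⌈(k−2)/(a+1)⌉² ) and ĉ_a(k) := (N_a(k−2) − π²·k²/(a+1)²)/k. Then the set of cluster points of the sequence (ĉ_a(k))_{k≥4} is finite. -/

import Mathlib

open Real Filter Topology

lemma ceil_int_div (c M : ℤ) (hM : 0 < M) :
    (⌈(c:ℝ)/(M:ℝ)⌉ : ℝ) = ((c:ℝ) + (((-c) % M : ℤ) : ℝ)) / (M:ℝ) := by
  have hd0 : (0:ℤ) ≤ (-c) % M := Int.emod_nonneg _ (by omega)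
  have hdM : (-c) % M < M := Int.emod_lt_of_pos _ hM
  set e : ℤ := -((-c)/M) with he
  have hdvd : c + (-c) % M = M * e := by rw [he, Int.emod_def]; ring
  have hMR : (0:ℝ) < (M:ℝ) := by exact_mod_cast hM
  have hcast : (c:ℝ) + (((-c) % M : ℤ):ℝ) = (M:ℝ) * (e:ℝ) := by exact_mod_cast congrArg (Int.cast : ℤ → ℝ) hdvd
  have hd0R : (0:ℝ) ≤ (((-c) % M : ℤ):ℝ) := by exact_mod_cast hd0
  have hdMR : (((-c) % M : ℤ):ℝ) < (M:ℝ) := by exact_mod_cast hdM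
  have hceil : ⌈(c:ℝ)/(M:ℝ)⌉ = e := by
    rw [Int.ceil_eq_iff]
    constructor
    · rw [lt_div_iff₀ hMR]; nlinarith
    · rw [div_le_iff₀ hMR]; nlinarith
  rw [hceil, eq_div_iff (ne_of_gt hMR)]
  linarith

lemma cluster_lemma (u : ℕ → ℝ) (M : ℕ) (hM : 0 < M) (L : ℕ → ℝ)
    (h : ∀ r, r < M → Tendsto (fun m => u (r + M * m)) atTop (𝓝 (L r))) :
    {x : ℝ | MapClusterPt x atTop u} ⊆ L '' Set.Iio M := by
  intro x hx
  have hfin : (L '' Set.Iio M).Finite := (Set.finite_Iio M).image L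
  have hclosed : IsClosed (L '' Set.Iio M) := hfin.isClosed
  rw [← hclosed.closure_eq, Metric.mem_closure_iff]
  intro ε hε
  have hN : ∀ r, r < M → ∃ N, ∀ m ≥ N, |u (r + M * m) - L r| < ε/2 := by
    intro r hr
    have h2 := Metric.tendsto_atTop.mp (h r hr) (ε/2) (by linarith)
    obtain ⟨N, hN⟩ := h2
    exact ⟨N, fun m hm => by simpa [Real.dist_eq] using hN m hm⟩
  choose! N hNspec using hN
  set B := (Finset.range M).sup N with hB
  have hfreq : ∃ᶠ n in atTop, u n ∈ Metric.ball x (ε/2) :=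
    mapClusterPt_iff_frequently.mp hx _ (Metric.ball_mem_nhds x (by linarith))
  obtain ⟨n, hn, hball⟩ := (frequently_atTop.mp hfreq) (M * (B+1))
  set r := n % M with hrdef
  set m := n / M with hmdef
  have hr : r < M := Nat.mod_lt _ hM
  have hnm : n = r + M * m := (Nat.mod_add_div n M).symm
  have hm : m ≥ B := by
    have h3 : M * (B+1) / M ≤ n / M := Nat.div_le_div_right hn
    rw [Nat.mul_div_cancel_left _ hM] at h3
    omega
  refine ⟨L r, ⟨r, hr, rfl⟩, ?_⟩
  have h1 : |u n - L r| < ε/2 := by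
    rw [hnm]
    exact hNspec r hr m (le_trans (Finset.le_sup (Finset.mem_range.mpr hr)) hm)
  have h2 : dist (u n) x < ε/2 := hball
  have h4 : dist x (L r) ≤ dist x (u n) + dist (u n) (L r) := dist_triangle _ _ _
  rw [dist_comm x (u n), Real.dist_eq, Real.dist_eq, Real.dist_eq] at h4
  rw [Real.dist_eq] at h2 ⊢
  calc |x - L r| ≤ |u n - x| + |u n - L r| := h4
    _ < ε := by linarith


/-- Rational case of the last theorem of Section 6.2 (Dirichlet version):
the set of cluster points of `(ĉ_a(k))_{k≥4}` is finite. -/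
theorem stmt8 (a : ℝ) (ha : 0 < a) (hrat : ∃ q : ℚ, a = (q : ℝ))
    (N chat : ℤ → ℝ)
    (hN : ∀ k : ℤ, N k = min (π ^ 2 * ((⌈a * (k : ℝ) / (a + 1)⌉ : ℝ)) ^ 2 / a ^ 2)
        (π ^ 2 * ((⌈(k : ℝ) / (a + 1)⌉ : ℝ)) ^ 2))
    (hchat : ∀ k : ℤ, chat k = (N (k - 2) - π ^ 2 * (k : ℝ) ^ 2 / (a + 1) ^ 2) / (k : ℝ)) :
    {x : ℝ | MapClusterPt x atTop (fun n : ℕ => chat ((n : ℤ) + 4))}.Finite := by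
  obtain ⟨q, hq⟩ := hrat
  subst hq
  have hq0 : 0 < q := by exact_mod_cast ha
  set P : ℤ := q.num with hPdef
  set Q : ℤ := (q.den : ℤ) with hQdef
  have hP : 0 < P := Rat.num_pos.mpr hq0
  have hQ : 0 < Q := by rw [hQdef]; exact_mod_cast q.pos
  set M : ℤ := P + Q with hMdef
  have hM : 0 < M := by omega
  have hPR : (0:ℝ) < (P:ℝ) := by exact_mod_cast hP
  have hQR : (0:ℝ) < (Q:ℝ) := by exact_mod_cast hQ
  have hMR : ((M:ℤ):ℝ) = (P:ℝ) + (Q:ℝ) := by rw [hMdef]; push_cast; ring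
  have haPQ : (q:ℝ) = (P:ℝ)/(Q:ℝ) := by rw [Rat.cast_def, hPdef, hQdef]; push_cast; ring
  set Mn : ℕ := M.toNat with hMndef
  have hMncast : ((Mn:ℤ)) = M := Int.toNat_of_nonneg hM.le
  have hMn0 : 0 < Mn := by omega
  set d1 : ℕ → ℤ := fun r => (-(P * ((r:ℤ) + 2))) % M with hd1
  set d2 : ℕ → ℤ := fun r => (-(Q * ((r:ℤ) + 2))) % M with hd2
  set β1 : ℕ → ℝ := fun r => (Q:ℝ) * ((d1 r : ℤ):ℝ) / ((P:ℝ) * ((P:ℝ)+(Q:ℝ))) - 2 * (Q:ℝ) / ((P:ℝ)+(Q:ℝ)) with hb1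
  set β2 : ℕ → ℝ := fun r => ((d2 r : ℤ):ℝ) / ((P:ℝ)+(Q:ℝ)) - 2 * (Q:ℝ) / ((P:ℝ)+(Q:ℝ)) with hb2
  set L : ℕ → ℝ := fun r =>
    min (π^2 * (2 * ((Q:ℝ)/((P:ℝ)+(Q:ℝ))) * β1 r)) (π^2 * (2 * ((Q:ℝ)/((P:ℝ)+(Q:ℝ))) * β2 r)) with hL
  have key : ∀ r m : ℕ, chat ((↑(r + Mn * m) : ℤ) + 4) =
      min (π^2 * (2*((Q:ℝ)/((P:ℝ)+(Q:ℝ))) * β1 r + (β1 r)^2 / (((r + Mn*m : ℕ):ℝ) + 4)))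
          (π^2 * (2*((Q:ℝ)/((P:ℝ)+(Q:ℝ))) * β2 r + (β2 r)^2 / (((r + Mn*m : ℕ):ℝ) + 4))) := by
    intro r m
    set n : ℕ := r + Mn * m with hn
    set k : ℤ := (n:ℤ) + 4 with hk
    have hkR : ((k:ℤ):ℝ) = ((n:ℕ):ℝ) + 4 := by rw [hk]; push_cast; ring
    have hkpos : (0:ℝ) < ((k:ℤ):ℝ) := by rw [hkR]; positivity
    have hkne : ((k:ℤ):ℝ) ≠ 0 := ne_of_gt hkpos
    have hPQne : (P:ℝ) + (Q:ℝ) ≠ 0 := by positivity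
    have hc1 : (q:ℝ) * ((k - 2 : ℤ):ℝ) / ((q:ℝ) + 1) = ((P * (k-2) : ℤ):ℝ) / ((M:ℤ):ℝ) := by
      rw [haPQ, hMR]
      push_cast
      field_simp
    have hc2 : ((k - 2 : ℤ):ℝ) / ((q:ℝ) + 1) = ((Q * (k-2) : ℤ):ℝ) / ((M:ℤ):ℝ) := by
      rw [haPQ, hMR]
      push_cast
      field_simp
    have he1 : (-(P * (k - 2))) % M = d1 r := by
      have hsplit : -(P * (k - 2)) = -(P * ((r:ℤ) + 2)) + (-(P * (m:ℤ))) * M := by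
        rw [hk, hn]
        push_cast [hMncast]
        ring
      rw [hsplit, Int.add_mul_emod_self_right]
    have he2 : (-(Q * (k - 2))) % M = d2 r := by
      have hsplit : -(Q * (k - 2)) = -(Q * ((r:ℤ) + 2)) + (-(Q * (m:ℤ))) * M := by
        rw [hk, hn]
        push_cast [hMncast]
        ring
      rw [hsplit, Int.add_mul_emod_self_right]
    rw [hchat, hN, hc1, hc2, ceil_int_div _ _ hM, ceil_int_div _ _ hM, he1, he2, ← hkR]
    rw [← min_sub_sub_right, ← min_div_div_right hkpos.le]
    have goal1 : (π ^ 2 * ((↑(P * (k - 2)) + ↑(d1 r)) / ↑M) ^ 2 / (q:ℝ) ^ 2 -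
        π ^ 2 * ((k:ℤ):ℝ) ^ 2 / ((q:ℝ) + 1) ^ 2) / ((k:ℤ):ℝ) =
        π^2 * (2*((Q:ℝ)/((P:ℝ)+(Q:ℝ))) * β1 r + (β1 r)^2 / ((k:ℤ):ℝ)) := by
      rw [haPQ, hMR, hb1]
      push_cast
      field_simp
      ring
    have goal2 : (π ^ 2 * ((↑(Q * (k - 2)) + ↑(d2 r)) / ↑M) ^ 2 -
        π ^ 2 * ((k:ℤ):ℝ) ^ 2 / ((q:ℝ) + 1) ^ 2) / ((k:ℤ):ℝ) =
        π^2 * (2*((Q:ℝ)/((P:ℝ)+(Q:ℝ))) * β2 r + (β2 r)^2 / ((k:ℤ):ℝ)) := by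
      rw [haPQ, hMR, hb2]
      push_cast
      field_simp
      ring
    rw [goal1, goal2]
  have tends : ∀ r, r < Mn → Tendsto (fun m : ℕ => chat ((↑(r + Mn * m):ℤ) + 4)) atTop (𝓝 (L r)) := by
    intro r hr
    have hmono : ∀ m : ℕ, m ≤ r + Mn * m := fun m =>
      le_trans (Nat.le_mul_of_pos_left m hMn0) (Nat.le_add_left _ _)
    have hnat : Tendsto (fun m : ℕ => r + Mn * m) atTop atTop :=
      tendsto_atTop_mono hmono tendsto_id
    have hkt : Tendsto (fun m : ℕ => ((r + Mn * m : ℕ):ℝ) + 4) atTop atTop :=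
      tendsto_atTop_add_const_right _ 4 (tendsto_natCast_atTop_atTop.comp hnat)
    have hinv : Tendsto (fun m : ℕ => (((r + Mn * m : ℕ):ℝ) + 4)⁻¹) atTop (𝓝 0) :=
      hkt.inv_tendsto_atTop
    have t1 : Tendsto (fun m : ℕ => π^2 * (2*((Q:ℝ)/((P:ℝ)+(Q:ℝ))) * β1 r +
        (β1 r)^2 / (((r + Mn*m : ℕ):ℝ) + 4))) atTop
        (𝓝 (π^2 * (2 * ((Q:ℝ)/((P:ℝ)+(Q:ℝ))) * β1 r))) := by
      have h := ((tendsto_const_nhds (x := 2*((Q:ℝ)/((P:ℝ)+(Q:ℝ))) * β1 r)).add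
        (hinv.const_mul ((β1 r)^2))).const_mul (π^2)
      simpa [div_eq_mul_inv] using h
    have t2 : Tendsto (fun m : ℕ => π^2 * (2*((Q:ℝ)/((P:ℝ)+(Q:ℝ))) * β2 r +
        (β2 r)^2 / (((r + Mn*m : ℕ):ℝ) + 4))) atTop
        (𝓝 (π^2 * (2 * ((Q:ℝ)/((P:ℝ)+(Q:ℝ))) * β2 r))) := by
      have h := ((tendsto_const_nhds (x := 2*((Q:ℝ)/((P:ℝ)+(Q:ℝ))) * β2 r)).add
        (hinv.const_mul ((β2 r)^2))).const_mul (π^2)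
      simpa [div_eq_mul_inv] using h
    have hfun : (fun m : ℕ => chat ((↑(r + Mn * m):ℤ) + 4)) =
        fun m : ℕ => min (π^2 * (2*((Q:ℝ)/((P:ℝ)+(Q:ℝ))) * β1 r + (β1 r)^2 / (((r + Mn*m : ℕ):ℝ) + 4)))
          (π^2 * (2*((Q:ℝ)/((P:ℝ)+(Q:ℝ))) * β2 r + (β2 r)^2 / (((r + Mn*m : ℕ):ℝ) + 4))) :=
      funext (key r)
    rw [hfun]
    simp only [hL]
    exact t1.min t2
  have hsub := cluster_lemma (fun n : ℕ => chat ((n:ℤ) + 4)) Mn hMn0 L (fun r hr => tends r hr)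
  exact ((Set.finite_Iio Mn).image L).subset hsub
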